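/- For every positive integer n and every natural number r, 𝒢(n, r) = 2 if and only if z_1(n) = 2, r ≥ 2, and either the Zeckendorf representation of n has only one part or r < z_2(n). -/

import Mathlib

/-- `IsZeck n l` says that `l` is the Zeckendorf representation of `n`, recorded as the
list of indices of the Fibonacci parts in increasing order: every index is at least `2`,
consecutive indices differ by at least `2` (no two consecutive Fibonacci numbers), and the
corresponding Fibonacci numbers sum to `n`.  The parts of the Zeckendorf representation in
increasing order are then `z₁(n) = Nat.fib l.headI`, `z₂(n) = Nat.fib (l.getD 1 0)`, etc. -/
def IsZeck (n : ℕ) (l : List ℕ) : Prop :=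
  (∀ i ∈ l, 2 ≤ i) ∧ l.Chain' (fun a b => a + 2 ≤ b) ∧ (l.map Nat.fib).sum = n

/-- The Grundy values of single-heap Fibonacci nim positions `(n, r)`, where `n` is the heap
size and `r` is the maximal number of tokens that may be removed on the next move:
`grundy n r` is the least natural number not of the form
`grundy (n - k) (min (2 * k) (n - k))` for some `k` with `1 ≤ k ≤ min r n`.
In particular `grundy 0 r = 0` and `grundy n 0 = 0`. -/
noncomputable def grundy (n r : ℕ) : ℕ :=
  sInf {m : ℕ | ∀ k, 1 ≤ k → k ≤ min r n → grundy (n - k) (min (2 * k) (n - k)) ≠ m}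
termination_by n
decreasing_by
  have : k ≤ n := le_trans ‹k ≤ min r n› (min_le_right _ _)
  omega


theorem grundy_eq_iff (n r v : ℕ) : grundy n r = v ↔
    (∀ k, 1 ≤ k → k ≤ min r n → grundy (n - k) (min (2 * k) (n - k)) ≠ v) ∧
    (∀ w < v, ∃ k, 1 ≤ k ∧ k ≤ min r n ∧ grundy (n - k) (min (2 * k) (n - k)) = w) := by
  set f : ℕ → ℕ := fun k => grundy (n - k) (min (2 * k) (n - k)) with hf
  set S : Set ℕ := {m : ℕ | ∀ k, 1 ≤ k → k ≤ min r n → f k ≠ m} with hS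
  have hgr : grundy n r = sInf S := by rw [grundy]
  have hne : S.Nonempty := by
    refine ⟨(Finset.Icc 1 (min r n)).sup f + 1, fun k hk1 hk2 => ?_⟩
    have : f k ≤ (Finset.Icc 1 (min r n)).sup f :=
      Finset.le_sup (Finset.mem_Icc.2 ⟨hk1, hk2⟩)
    omega
  rw [hgr]
  constructor
  · rintro rfl
    refine ⟨Nat.sInf_mem hne, fun w hw => ?_⟩
    have : w ∉ S := Nat.notMem_of_lt_sInf hw
    simp only [hS, Set.mem_setOf_eq, not_forall] at this
    obtain ⟨k, hk1, hk2, hk3⟩ := this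
    exact ⟨k, hk1, hk2, by simpa using hk3⟩
  · rintro ⟨h1, h2⟩
    refine le_antisymm (Nat.sInf_le h1) ?_
    by_contra h
    push_neg at h
    obtain ⟨k, hk1, hk2, hk3⟩ := h2 _ h
    exact Nat.sInf_mem hne k hk1 hk2 hk3

theorem grundy_zero_left (r : ℕ) : grundy 0 r = 0 := by
  rw [grundy_eq_iff]
  exact ⟨fun k hk1 hk2 => by simp at hk2; omega, fun w hw => by omega⟩

lemma IsZeck.cons {n : ℕ} {a : ℕ} {tl : List ℕ} (h : IsZeck n (a :: tl)) :
    2 ≤ a ∧ (∀ j ∈ tl, a + 2 ≤ j) ∧ IsZeck ((tl.map Nat.fib).sum) tl ∧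
      Nat.fib a + (tl.map Nat.fib).sum = n := by
  obtain ⟨h1, h2, h3⟩ := h
  have : IsTrans ℕ (fun a b : ℕ => a + 2 ≤ b) := ⟨by intro x y z h h'; omega⟩
  have hpw : (a :: tl).Pairwise (fun a b => a + 2 ≤ b) :=
    (List.isChain_iff_pairwise (R := fun a b : ℕ => a + 2 ≤ b)).1 h2
  refine ⟨h1 a (by simp), fun j hj => List.rel_of_pairwise_cons hpw hj, ?_, ?_⟩
  · exact ⟨fun i hi => h1 i (by simp [hi]), h2.tail, rfl⟩
  · simpa using h3

lemma IsZeck.append {d s : ℕ} {m tl : List ℕ} (hm : IsZeck d m) (htl : IsZeck s tl)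
    (hsep : ∀ i ∈ m, ∀ j ∈ tl, i + 2 ≤ j) : IsZeck (d + s) (m ++ tl) := by
  obtain ⟨h1, h2, h3⟩ := hm
  obtain ⟨g1, g2, g3⟩ := htl
  refine ⟨?_, ?_, ?_⟩
  · intro i hi; rcases List.mem_append.1 hi with h | h
    exacts [h1 i h, g1 i h]
  · apply List.isChain_append.2
    refine ⟨h2, g2, ?_⟩
    intro x hx y hy
    exact hsep x (List.mem_of_mem_getLast? hx) y (List.mem_of_mem_head? hy)
  · simp [h3, g3]

lemma isZeck_singleton {a : ℕ} (ha : 2 ≤ a) : IsZeck (Nat.fib a) [a] :=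
  ⟨by simpa using ha, List.isChain_singleton _, by simp⟩

lemma isZeck_cons_of {i0 s2 : ℕ} {tl2 : List ℕ} (h0 : 2 ≤ i0) (h : IsZeck s2 tl2)
    (hsep : ∀ j ∈ tl2, i0 + 2 ≤ j) : IsZeck (Nat.fib i0 + s2) (i0 :: tl2) := by
  have := (isZeck_singleton h0).append h ?_
  · simpa using this
  · intro i hi j hj
    simp at hi
    subst hi
    exact hsep j hj

lemma fib_head_le {d : ℕ} {q : ℕ} {u : List ℕ} (hm : IsZeck d (q :: u)) :
    Nat.fib q ≤ d := by
  have := hm.cons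
  omega

lemma fib_second_le {d : ℕ} {q q2 : ℕ} {u : List ℕ} (hm : IsZeck d (q :: q2 :: u)) :
    Nat.fib q2 ≤ d := by
  have h1 := hm.cons
  have h2 := h1.2.2.1.cons
  omega

lemma two_fib_lt {a b : ℕ} (ha : 2 ≤ a) (hab : a + 2 ≤ b) : 2 * Nat.fib a < Nat.fib b := by
  have h1 : Nat.fib a < Nat.fib (a + 1) := Nat.fib_lt_fib_succ (by omega)
  have h2 : Nat.fib (a + 2) = Nat.fib a + Nat.fib (a + 1) := Nat.fib_add_two
  have h3 : Nat.fib (a + 2) ≤ Nat.fib b := Nat.fib_mono hab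
  omega

lemma fib_index_eq_two {a : ℕ} (h2 : 2 ≤ a) (h : Nat.fib a = 1) : a = 2 := by
  by_contra hne
  have h3 : 3 ≤ a := by omega
  have : (2 : ℕ) ≤ Nat.fib a := by
    calc (2 : ℕ) = Nat.fib 3 := rfl
    _ ≤ Nat.fib a := Nat.fib_mono h3
  omega

lemma fib_index_eq_three {a : ℕ} (h2 : 2 ≤ a) (h : Nat.fib a = 2) : a = 3 := by
  rcases Nat.lt_or_ge a 4 with h4 | h4
  · interval_cases a
    · simp [Nat.fib] at h
    · rfl
  · exfalso
    have : (3 : ℕ) ≤ Nat.fib a := by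
      calc (3 : ℕ) = Nat.fib 4 := rfl
      _ ≤ Nat.fib a := Nat.fib_mono h4
    omega

lemma getD_one (q : ℕ) (u : List ℕ) : (q :: u).getD 1 0 = u.headI := by
  cases u <;> rfl

lemma zeck_exists : ∀ b d : ℕ, 0 < d → d < Nat.fib b →
    ∃ m, IsZeck d m ∧ m ≠ [] ∧ (∀ i ∈ m, i < b) ∧
      2 * d + Nat.fib m.headI ≤ 2 * Nat.fib b ∧
      (2 ≤ m.length → 2 * d + Nat.fib (m.getD 1 0) ≤ 2 * Nat.fib b + 2 * Nat.fib m.headI) := by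
  intro b
  induction b using Nat.strong_induction_on with
  | _ b IH =>
  intro d hd hdb
  rcases le_or_gt b 2 with hb | hb
  · exfalso
    have : Nat.fib b ≤ 1 := by
      calc Nat.fib b ≤ Nat.fib 2 := Nat.fib_mono hb
      _ = 1 := by norm_num
    omega
  rcases eq_or_lt_of_le (show 3 ≤ b from hb) with hb3 | hb4
  · have hb3 : b = 3 := hb3.symm
    subst hb3
    have : d = 1 := by simp [Nat.fib] at hdb; omega
    subst this
    exact ⟨[2], ⟨by simp, List.isChain_singleton _, by simp⟩, by simp, by simp, by norm_num, by simp⟩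
  · have hb4 : 4 ≤ b := hb4
    have hfib : Nat.fib b = Nat.fib (b - 2) + Nat.fib (b - 1) := by
      have h1 : b - 2 + 2 = b := by omega
      have h2 : b - 2 + 1 = b - 1 := by omega
      calc Nat.fib b = Nat.fib (b - 2 + 2) := by rw [h1]
        _ = Nat.fib (b - 2) + Nat.fib (b - 2 + 1) := Nat.fib_add_two
        _ = Nat.fib (b - 2) + Nat.fib (b - 1) := by rw [h2]
    have hmono : Nat.fib (b - 3) ≤ Nat.fib (b - 2) := Nat.fib_mono (by omega)
    have hfib1 : Nat.fib (b - 1) = Nat.fib (b - 3) + Nat.fib (b - 2) := by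
      have h1 : b - 3 + 2 = b - 1 := by omega
      have h2 : b - 3 + 1 = b - 2 := by omega
      calc Nat.fib (b - 1) = Nat.fib (b - 3 + 2) := by rw [h1]
        _ = Nat.fib (b - 3) + Nat.fib (b - 3 + 1) := Nat.fib_add_two
        _ = Nat.fib (b - 3) + Nat.fib (b - 2) := by rw [h2]
    rcases lt_trichotomy d (Nat.fib (b - 1)) with hlt | heq | hgt
    · obtain ⟨m, hm, hne, hbd, h1, h2⟩ := IH (b - 1) (by omega) d hd hlt
      have hmono2 : Nat.fib (b - 1) ≤ Nat.fib b := Nat.fib_mono (by omega)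
      exact ⟨m, hm, hne, fun i hi => by have := hbd i hi; omega,
        by omega, fun hl => by have := h2 hl; omega⟩
    · refine ⟨[b - 1], ?_, by simp, by simp; omega, ?_, by simp⟩
      · exact heq ▸ isZeck_singleton (by omega)
      · simp only [List.headI]
        omega
    · set d' := d - Nat.fib (b - 1) with hd'
      have hd'pos : 0 < d' := by omega
      have hd'lt : d' < Nat.fib (b - 2) := by omega
      obtain ⟨m', hm', hne', hbd', h1', h2'⟩ := IH (b - 2) (by omega) d' hd'pos hd'lt
      obtain ⟨q, rest, rfl⟩ := List.exists_cons_of_ne_nil hne'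
      have hglue : IsZeck (d' + Nat.fib (b - 1)) ((q :: rest) ++ [b - 1]) := by
        refine hm'.append (isZeck_singleton (by omega)) ?_
        intro i hi j hj
        simp at hj
        have := hbd' i hi
        omega
      have hdd : d' + Nat.fib (b - 1) = d := by omega
      rw [hdd] at hglue
      refine ⟨(q :: rest) ++ [b - 1], hglue, by simp, ?_, ?_, ?_⟩
      · intro i hi
        rcases List.mem_append.1 hi with h | h
        · have := hbd' i h; omega
        · simp at h; omega
      · simp only [List.cons_append, List.headI] at h1' ⊢
        omega
      · intro _
        cases rest with
        | nil =>
          have hq : Nat.fib q = d' := by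
            have := hm'.2.2
            simpa using this
          have e1 : (([q] ++ [b - 1] : List ℕ)).getD 1 0 = b - 1 := rfl
          have e2 : (([q] ++ [b - 1] : List ℕ)).headI = q := rfl
          rw [e1, e2]
          simp only [List.headI] at h1'
          omega
        | cons q2 rest' =>
          have hlen : 2 ≤ (q :: q2 :: rest').length := by simp
          have := h2' hlen
          have e1 : ((q :: q2 :: rest' ++ [b - 1] : List ℕ)).getD 1 0 = q2 := rfl
          have e2 : ((q :: q2 :: rest' ++ [b - 1] : List ℕ)).headI = q := rfl
          have e3 : ((q :: q2 :: rest' : List ℕ)).getD 1 0 = q2 := rfl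
          have e4 : ((q :: q2 :: rest' : List ℕ)).headI = q := rfl
          rw [e3, e4] at this
          rw [e1, e2]
          omega

def Good (n : ℕ) : Prop := ∀ (r : ℕ) (l : List ℕ), IsZeck n l → l ≠ [] →
  (grundy n r = 0 ↔ r < Nat.fib l.headI) ∧
  (grundy n r = 1 ↔ Nat.fib l.headI = 1 ∧ 1 ≤ r ∧
      (l.length = 1 ∨ r < Nat.fib (l.getD 1 0))) ∧
  (grundy n r = 2 ↔ Nat.fib l.headI = 2 ∧ 2 ≤ r ∧
      (l.length = 1 ∨ r < Nat.fib (l.getD 1 0)))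

lemma good_cons {m : ℕ} (c : ℕ) {q : ℕ} {u : List ℕ} (hg : Good m) (h : IsZeck m (q :: u)) :
    (grundy m c = 0 ↔ c < Nat.fib q) ∧
    (grundy m c = 1 ↔ Nat.fib q = 1 ∧ 1 ≤ c ∧ (u = [] ∨ c < Nat.fib u.headI)) ∧
    (grundy m c = 2 ↔ Nat.fib q = 2 ∧ 2 ≤ c ∧ (u = [] ∨ c < Nat.fib u.headI)) := by
  have hlen : (q :: u).length = 1 ↔ u = [] := by cases u <;> simp
  have := hg c (q :: u) h (by simp)
  rw [getD_one, hlen] at this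
  exact this

lemma good_cons' {m : ℕ} (c : ℕ) {q v : ℕ} {u : List ℕ} (hg : Good m) (h : IsZeck m (q :: u))
    (hv : v = 1 ∨ v = 2) :
    grundy m c = v ↔ Nat.fib q = v ∧ v ≤ c ∧ (u = [] ∨ c < Nat.fib u.headI) := by
  rcases hv with rfl | rfl
  exacts [(good_cons c hg h).2.1, (good_cons c hg h).2.2]

theorem good_all : ∀ n, Good n := by
  intro n
  induction n using Nat.strong_induction_on with
  | _ n IH =>
  intro r l hl hlne
  obtain ⟨a, tl, rfl⟩ := List.exists_cons_of_ne_nil hlne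
  obtain ⟨ha2, hsep, htl, hsum⟩ := hl.cons
  set p := Nat.fib a with hp
  set s := (tl.map Nat.fib).sum with hs
  clear_value p s
  have hppos : 1 ≤ p := by
    have := Nat.fib_pos.2 (show 0 < a by omega)
    omega
  have hn : n = p + s := by omega
  have hnpos : 0 < n := by omega
  -- every move removing fewer than p tokens leaves a nonzero Grundy value
  have F0 : ∀ k, 1 ≤ k → k < p → grundy (n - k) (min (2 * k) (n - k)) ≠ 0 := by
    intro k hk1 hk2 h0
    obtain ⟨m, hm, hmne, hmbd, hH, _⟩ := zeck_exists a (p - k) (by omega) (by omega)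
    obtain ⟨q, u, rfl⟩ := List.exists_cons_of_ne_nil hmne
    have hrep : IsZeck ((p - k) + s) ((q :: u) ++ tl) := by
      refine hm.append htl ?_
      intro i hi j hj
      have h1 := hmbd i hi
      have h2 := hsep j hj
      omega
    rw [List.cons_append] at hrep
    have hnk : n - k = (p - k) + s := by omega
    rw [← hnk] at hrep
    have hfq : Nat.fib q ≤ p - k := fib_head_le hm
    rw [show ((q :: u).headI) = q from rfl] at hH
    have := (good_cons (min (2 * k) (n - k)) (IH (n - k) (by omega)) hrep).1.1 h0
    omega
  -- removing exactly p tokens leaves Grundy value 0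
  have F1 : grundy (n - p) (min (2 * p) (n - p)) = 0 := by
    cases tl with
    | nil =>
      have hs0 : s = 0 := by simpa using hs
      have h0 : n - p = 0 := by omega
      rw [h0, grundy_zero_left]
    | cons b tl' =>
      have hab : a + 2 ≤ b := hsep b (by simp)
      have hnk : n - p = s := by omega
      have hrep : IsZeck (n - p) (b :: tl') := by rw [hnk]; exact htl
      refine ((good_cons (min (2 * p) (n - p)) (IH (n - p) (by omega)) hrep).1).2 ?_
      have := two_fib_lt ha2 hab
      omega
  have hP0 : grundy n r = 0 ↔ r < p := by
    constructor
    · intro h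
      by_contra hr
      push_neg at hr
      exact ((grundy_eq_iff n r 0).1 h).1 p (by omega) (by omega) F1
    · intro hr
      rw [grundy_eq_iff]
      exact ⟨fun k hk1 hk2 => F0 k hk1 (by omega), fun w hw => by omega⟩
  -- the key middle-range move analysis
  have FK : ∀ (b : ℕ) (tl' : List ℕ), tl = b :: tl' → (p = 1 ∨ p = 2) → ∀ k, p + 1 ≤ k →
      k ≤ r → r < Nat.fib b → grundy (n - k) (min (2 * k) (n - k)) ≠ p := by
    intro b tl' htleq hp12 k hk1 hk2 hk3
    subst htleq
    obtain ⟨hb2, hsep', htl2, hsum2⟩ := htl.cons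
    have hab : a + 2 ≤ b := hsep b (by simp)
    set d := Nat.fib b - (k - p) with hd
    have hdpos : p + 1 ≤ d := by omega
    have hdlt : d < Nat.fib b := by omega
    obtain ⟨m, hm, hmne, hmbd, hH1, hH2⟩ := zeck_exists b d (by omega) hdlt
    obtain ⟨q, u, rfl⟩ := List.exists_cons_of_ne_nil hmne
    have hrep : IsZeck (d + (tl'.map Nat.fib).sum) ((q :: u) ++ tl') := by
      refine hm.append htl2 ?_
      intro i hi j hj
      have h1 := hmbd i hi
      have h2 := hsep' j hj
      omega
    rw [List.cons_append] at hrep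
    have hnk : n - k = d + (tl'.map Nat.fib).sum := by omega
    rw [← hnk] at hrep
    intro hvk
    obtain ⟨hq, hvc, hcond⟩ :=
      (good_cons' (min (2 * k) (n - k)) (IH (n - k) (by omega)) hrep hp12).1 hvk
    cases u with
    | nil =>
      have hfq : Nat.fib q = d := by
        have := hm.2.2
        simpa using this
      omega
    | cons q2 u' =>
      have hq2d : Nat.fib q2 ≤ d := fib_second_le hm
      have hH2' := hH2 (by simp)
      have e3 : ((q :: q2 :: u' : List ℕ)).getD 1 0 = q2 := rfl
      have e4 : ((q :: q2 :: u' : List ℕ)).headI = q := rfl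
      rw [e3, e4] at hH2'
      rcases hcond with h | h
      · simp at h
      · have e5 : (((q2 :: u') ++ tl' : List ℕ)).headI = q2 := rfl
        rw [e5] at h
        omega
  have hP1 : grundy n r = 1 ↔ p = 1 ∧ 1 ≤ r ∧ (tl = [] ∨ r < Nat.fib tl.headI) := by
    constructor
    · intro h
      have H := (grundy_eq_iff n r 1).1 h
      obtain ⟨k0, hk01, hk02, hv0⟩ := H.2 0 (by omega)
      have hr1 : 1 ≤ r := by omega
      have hp1' : p = 1 := by
        by_contra hpne
        have hp2 : 2 ≤ p := by omega
        rcases lt_or_ge r p with hrp | hrp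
        · have h0 := hP0.2 hrp
          omega
        · have hrep : IsZeck (Nat.fib 2 + s) (2 :: tl) :=
            isZeck_cons_of (by norm_num) htl (fun j hj => by have := hsep j hj; omega)
          have e2 : Nat.fib 2 = 1 := rfl
          have hnk : n - (p - 1) = Nat.fib 2 + s := by omega
          rw [← hnk] at hrep
          have hv : grundy (n - (p - 1)) (min (2 * (p - 1)) (n - (p - 1))) = 1 := by
            refine (good_cons _ (IH (n - (p - 1)) (by omega)) hrep).2.1.2 ⟨rfl, by omega, ?_⟩
            cases tl with
            | nil => exact Or.inl rfl
            | cons b tl' =>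
              right
              have hab : a + 2 ≤ b := hsep b (by simp)
              have := two_fib_lt ha2 hab
              show min (2 * (p - 1)) (n - (p - 1)) < Nat.fib b
              omega
          exact H.1 (p - 1) (by omega) (by omega) hv
      refine ⟨hp1', hr1, ?_⟩
      by_contra hc
      push_neg at hc
      obtain ⟨hc1, hc2⟩ := hc
      obtain ⟨b, tl', rfl⟩ := List.exists_cons_of_ne_nil hc1
      obtain ⟨hb2, hsep', htl2, hsum2⟩ := htl.cons
      have hab : a + 2 ≤ b := hsep b (by simp)
      have hfb : 1 ≤ Nat.fib b := Nat.fib_pos.2 (by omega)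
      have hble : Nat.fib b ≤ r := hc2
      have hrep : IsZeck (Nat.fib 2 + (tl'.map Nat.fib).sum) (2 :: tl') :=
        isZeck_cons_of (by norm_num) htl2 (fun j hj => by have := hsep' j hj; omega)
      have e2 : Nat.fib 2 = 1 := rfl
      have hnk : n - Nat.fib b = Nat.fib 2 + (tl'.map Nat.fib).sum := by omega
      rw [← hnk] at hrep
      have hv : grundy (n - Nat.fib b) (min (2 * Nat.fib b) (n - Nat.fib b)) = 1 := by
        refine (good_cons _ (IH (n - Nat.fib b) (by omega)) hrep).2.1.2 ⟨rfl, by omega, ?_⟩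
        cases tl' with
        | nil => exact Or.inl rfl
        | cons c2 u' =>
          right
          have hbc : b + 2 ≤ c2 := hsep' c2 (by simp)
          have := two_fib_lt (by omega : 2 ≤ b) hbc
          show min (2 * Nat.fib b) (n - Nat.fib b) < Nat.fib c2
          omega
      exact H.1 (Nat.fib b) (by omega) (by omega) hv
    · rintro ⟨hp1', hr1, hcond⟩
      rw [grundy_eq_iff]
      constructor
      · intro k hk1 hk2
        cases tl with
        | nil =>
          have hs0 : s = 0 := by simpa using hs
          have hk : k = 1 := by omega
          subst hk
          have h0 : n - 1 = 0 := by omega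
          rw [h0, grundy_zero_left]
          omega
        | cons b tl' =>
          have hrb : r < Nat.fib b := by
            rcases hcond with hcc | hcc
            · exact absurd hcc (by simp)
            · exact hcc
          have hab : a + 2 ≤ b := hsep b (by simp)
          have ha2' : a = 2 := fib_index_eq_two ha2 (by omega)
          rcases eq_or_lt_of_le hk1 with hk1' | hk1'
          · rw [← hk1']
            have hnk : n - 1 = s := by omega
            intro hv
            have hrep : IsZeck (n - 1) (b :: tl') := by rw [hnk]; exact htl
            have hfb1 := ((good_cons _ (IH (n - 1) (by omega)) hrep).2.1).1 hv
            have hfb3 : 3 ≤ Nat.fib b := by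
              calc (3 : ℕ) = Nat.fib 4 := rfl
              _ ≤ Nat.fib b := Nat.fib_mono (by omega)
            omega
          · have := FK b tl' rfl (Or.inl hp1') k (by omega) (by omega) hrb
            rw [hp1'] at this
            exact this
      · intro w hw
        have hw0 : w = 0 := by omega
        subst hw0
        refine ⟨p, by omega, by omega, F1⟩
  have hP2 : grundy n r = 2 ↔ p = 2 ∧ 2 ≤ r ∧ (tl = [] ∨ r < Nat.fib tl.headI) := by
    constructor
    · intro h
      have H := (grundy_eq_iff n r 2).1 h
      obtain ⟨k0, hk01, hk02, hv0⟩ := H.2 0 (by omega)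
      obtain ⟨k1, hk11, hk12, hv1⟩ := H.2 1 (by omega)
      have hr2 : 2 ≤ min r n := by
        by_contra hmin
        push_neg at hmin
        have hk0 : k0 = 1 := by omega
        have hk1' : k1 = 1 := by omega
        rw [hk0] at hv0
        rw [hk1'] at hv1
        omega
      have hrn : 2 ≤ r := by omega
      have hp2' : p = 2 := by
        by_contra hpne
        rcases lt_trichotomy p 2 with hp1 | hp2 | hp3
        · have hp1 : p = 1 := by omega
          cases tl with
          | nil =>
            have hs0 : s = 0 := by simpa using hs
            omega
          | cons b tl' =>
            obtain ⟨hb2, hsep', htl2, hsum2⟩ := htl.cons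
            have hab : a + 2 ≤ b := hsep b (by simp)
            rcases lt_or_ge r (Nat.fib b) with hrb | hrb
            · have h1 := hP1.2 ⟨hp1, by omega, Or.inr hrb⟩
              omega
            · have hfb3 : 3 ≤ Nat.fib b := by
                calc (3 : ℕ) = Nat.fib 4 := rfl
                _ ≤ Nat.fib b := Nat.fib_mono (by omega)
              have hrep : IsZeck (Nat.fib 3 + (tl'.map Nat.fib).sum) (3 :: tl') :=
                isZeck_cons_of (by norm_num) htl2 (fun j hj => by have := hsep' j hj; omega)
              have e3 : Nat.fib 3 = 2 := rfl
              have hnk : n - (Nat.fib b - 1) = Nat.fib 3 + (tl'.map Nat.fib).sum := by omega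
              rw [← hnk] at hrep
              have hv : grundy (n - (Nat.fib b - 1))
                  (min (2 * (Nat.fib b - 1)) (n - (Nat.fib b - 1))) = 2 := by
                refine ((good_cons _ (IH _ (by omega)) hrep).2.2).2 ⟨rfl, by omega, ?_⟩
                cases tl' with
                | nil => exact Or.inl rfl
                | cons c2 u' =>
                  right
                  have hbc : b + 2 ≤ c2 := hsep' c2 (by simp)
                  have := two_fib_lt (by omega : 2 ≤ b) hbc
                  show min (2 * (Nat.fib b - 1)) (n - (Nat.fib b - 1)) < Nat.fib c2
                  omega
              exact H.1 (Nat.fib b - 1) (by omega) (by omega) hv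
        · exact hpne hp2
        · have ha4 : 4 ≤ a := by
            by_contra ha4
            push_neg at ha4
            have : Nat.fib a ≤ 2 := by
              calc Nat.fib a ≤ Nat.fib 3 := Nat.fib_mono (by omega)
              _ = 2 := rfl
            omega
          rcases lt_or_ge r p with hrp | hrp
          · have h0 := hP0.2 hrp
            omega
          · have hrep : IsZeck (Nat.fib 3 + s) (3 :: tl) :=
              isZeck_cons_of (by norm_num) htl (fun j hj => by have := hsep j hj; omega)
            have e3 : Nat.fib 3 = 2 := rfl
            have hnk : n - (p - 2) = Nat.fib 3 + s := by omega
            rw [← hnk] at hrep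
            have hv : grundy (n - (p - 2)) (min (2 * (p - 2)) (n - (p - 2))) = 2 := by
              refine ((good_cons _ (IH _ (by omega)) hrep).2.2).2 ⟨rfl, by omega, ?_⟩
              cases tl with
              | nil => exact Or.inl rfl
              | cons b tl' =>
                right
                have hab : a + 2 ≤ b := hsep b (by simp)
                have := two_fib_lt ha2 hab
                show min (2 * (p - 2)) (n - (p - 2)) < Nat.fib b
                omega
            exact H.1 (p - 2) (by omega) (by omega) hv
      refine ⟨hp2', hrn, ?_⟩
      by_contra hc
      push_neg at hc
      obtain ⟨hc1, hc2⟩ := hc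
      obtain ⟨b, tl', rfl⟩ := List.exists_cons_of_ne_nil hc1
      obtain ⟨hb2, hsep', htl2, hsum2⟩ := htl.cons
      have hab : a + 2 ≤ b := hsep b (by simp)
      have ha3 : a = 3 := fib_index_eq_three ha2 (by omega)
      have hfb : 1 ≤ Nat.fib b := Nat.fib_pos.2 (by omega)
      have hble : Nat.fib b ≤ r := hc2
      have hrep : IsZeck (Nat.fib 3 + (tl'.map Nat.fib).sum) (3 :: tl') :=
        isZeck_cons_of (by norm_num) htl2 (fun j hj => by have := hsep' j hj; omega)
      have e3 : Nat.fib 3 = 2 := rfl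
      have hnk : n - Nat.fib b = Nat.fib 3 + (tl'.map Nat.fib).sum := by omega
      rw [← hnk] at hrep
      have hv : grundy (n - Nat.fib b) (min (2 * Nat.fib b) (n - Nat.fib b)) = 2 := by
        refine ((good_cons _ (IH _ (by omega)) hrep).2.2).2 ⟨rfl, by omega, ?_⟩
        cases tl' with
        | nil => exact Or.inl rfl
        | cons c2 u' =>
          right
          have hbc : b + 2 ≤ c2 := hsep' c2 (by simp)
          have := two_fib_lt (by omega : 2 ≤ b) hbc
          show min (2 * Nat.fib b) (n - Nat.fib b) < Nat.fib c2
          omega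
      exact H.1 (Nat.fib b) (by omega) (by omega) hv
    · rintro ⟨hp2', hr2, hcond⟩
      rw [grundy_eq_iff]
      constructor
      · intro k hk1 hk2
        cases tl with
        | nil =>
          have hs0 : s = 0 := by simpa using hs
          have hk : k = 1 ∨ k = 2 := by omega
          rcases hk with hk | hk <;> subst hk
          · intro hv
            have hrep : IsZeck (n - 1) [2] := by
              have h1 : n - 1 = 1 := by omega
              rw [h1]
              exact ⟨by simp, List.isChain_singleton _, by decide⟩
            have := ((good_cons _ (IH (n - 1) (by omega)) hrep).2.2).1 hv
            have e2 : Nat.fib 2 = 1 := rfl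
            omega
          · have h0 : n - 2 = 0 := by omega
            rw [h0, grundy_zero_left]
            omega
        | cons b tl' =>
          have hrb : r < Nat.fib b := by
            rcases hcond with hcc | hcc
            · exact absurd hcc (by simp)
            · exact hcc
          have hab : a + 2 ≤ b := hsep b (by simp)
          have ha3 : a = 3 := fib_index_eq_three ha2 (by omega)
          have hk : k = 1 ∨ k = 2 ∨ 3 ≤ k := by omega
          rcases hk with hk | hk | hk
          · subst hk
            have hrep : IsZeck (Nat.fib 2 + s) (2 :: b :: tl') :=
              isZeck_cons_of (by norm_num) htl (fun j hj => by have := hsep j hj; omega)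
            have e2 : Nat.fib 2 = 1 := rfl
            have hnk : n - 1 = Nat.fib 2 + s := by omega
            rw [← hnk] at hrep
            intro hv
            have := ((good_cons _ (IH (n - 1) (by omega)) hrep).2.2).1 hv
            omega
          · subst hk
            rw [hp2'] at F1
            intro hv
            omega
          · have := FK b tl' rfl (Or.inr hp2') k (by omega) (by omega) hrb
            rw [hp2'] at this
            exact this
      · intro w hw
        have hw' : w = 0 ∨ w = 1 := by omega
        rcases hw' with hw' | hw' <;> subst hw'
        · refine ⟨2, by omega, by omega, ?_⟩
          rw [hp2'] at F1
          exact F1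
        · refine ⟨1, by omega, by omega, ?_⟩
          have hrep : IsZeck (Nat.fib 2 + s) (2 :: tl) :=
            isZeck_cons_of (by norm_num) htl (fun j hj => by have := hsep j hj; omega)
          have e2 : Nat.fib 2 = 1 := rfl
          have hnk : n - 1 = Nat.fib 2 + s := by omega
          rw [← hnk] at hrep
          refine ((good_cons _ (IH (n - 1) (by omega)) hrep).2.1).2 ⟨rfl, by omega, ?_⟩
          cases tl with
          | nil => exact Or.inl rfl
          | cons b tl' =>
            right
            have hab : a + 2 ≤ b := hsep b (by simp)
            have ha3 : a = 3 := fib_index_eq_three ha2 (by omega)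
            have h5 : 5 ≤ Nat.fib b := by
              calc (5 : ℕ) = Nat.fib 5 := rfl
              _ ≤ Nat.fib b := Nat.fib_mono (by omega)
            show min (2 * 1) (n - 1) < Nat.fib b
            omega
  have hlen : (a :: tl).length = 1 ↔ tl = [] := by cases tl <;> simp
  rw [show ((a :: tl).headI) = a from rfl, getD_one, hlen, ← hp]
  exact ⟨hP0, hP1, hP2⟩

/-- For every positive integer `n` and every natural number `r`, `𝒢(n, r) = 2` if and only if
`z₁(n) = 2`, `r ≥ 2`, and either the Zeckendorf representation of `n` has only one part or
`r < z₂(n)`. -/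
theorem grundy_eq_two_iff (n r : ℕ) (hn : 0 < n) (l : List ℕ) (hl : IsZeck n l) :
    grundy n r = 2 ↔
      Nat.fib l.headI = 2 ∧ 2 ≤ r ∧ (l.length = 1 ∨ r < Nat.fib (l.getD 1 0)) := by
  have hlne : l ≠ [] := by
    rintro rfl
    have h := hl.2.2
    simp at h
    omega
  exact (good_all n r l hl hlne).2.2
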